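/- arXiv:2207.05038 — 3 statements merged into one kernel-verified Lean document; each statement's English description precedes it below -/
import Mathlib

section
/- Let N, T ≥ 1 and let A(s) = Σ_{n ≤ N} a_n n^{−s} with complex coefficients a_n. Then ∫_{−T}^{T} |A(it)|² dt = (2T + O(N)) Σ_{n ≤ N} |a_n|², with an absolute implied constant. -/
open Finset MeasureTheory Complex

noncomputable def th (m n : ℕ) : ℝ := Real.log n - Real.log m

noncomputable def Kf (m n : ℕ) (U : ℝ) : ℝ :=
  if m = n then 2 * U else 2 * Real.sin (U * th m n) / th m n

noncomputable def Lf (m n : ℕ) (p q : ℝ) : ℝ :=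
  if m = n then q^2 - p^2 else 2 * (Real.cos (p * th m n) - Real.cos (q * th m n)) / (th m n)^2

noncomputable def wf (a : ℕ → ℂ) (m n : ℕ) : ℝ := (a m * (starRingEnd ℂ) (a n)).re

noncomputable def Ff (N : ℕ) (a : ℕ → ℂ) (U : ℝ) : ℝ :=
  ∑ m ∈ Icc 1 N, ∑ n ∈ Icc 1 N, wf a m n * Kf m n U

lemma prod_eq (m n : ℕ) (hm : m ≠ 0) (hn : n ≠ 0) (t : ℝ) :
    (m:ℂ)^(-(Complex.I*(t:ℂ))) * (starRingEnd ℂ) ((n:ℂ)^(-(Complex.I*(t:ℂ)))) =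
      Complex.exp ((Complex.I * ((th m n : ℝ):ℂ)) * (t:ℂ)) := by
  have hm' : (m:ℂ) ≠ 0 := by exact_mod_cast Nat.cast_ne_zero.mpr hm
  have hn' : (n:ℂ) ≠ 0 := by exact_mod_cast Nat.cast_ne_zero.mpr hn
  rw [Complex.cpow_def_of_ne_zero hm', Complex.cpow_def_of_ne_zero hn',
    ← Complex.exp_conj, ← Complex.exp_add]
  congr 1
  rw [← Complex.natCast_log, ← Complex.natCast_log]
  simp only [map_mul, map_neg, Complex.conj_ofReal, Complex.conj_I, th]
  push_cast
  ring

lemma integrand_eq (N : ℕ) (a : ℕ → ℂ) (t : ℝ) :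
    ‖∑ n ∈ Icc 1 N, a n * (n:ℂ)^(-(Complex.I*(t:ℂ)))‖^2 =
      ∑ m ∈ Icc 1 N, ∑ n ∈ Icc 1 N,
        (a m * (starRingEnd ℂ) (a n) * Complex.exp ((Complex.I * ((th m n : ℝ):ℂ)) * (t:ℂ))).re := by
  set z := ∑ n ∈ Icc 1 N, a n * (n:ℂ)^(-(Complex.I*(t:ℂ))) with hz
  have h1 : ‖z‖^2 = (z * (starRingEnd ℂ) z).re := by
    rw [Complex.mul_conj]
    simp [Complex.normSq_eq_norm_sq]
    norm_cast
  rw [h1, hz, map_sum, Finset.sum_mul_sum, Complex.re_sum]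
  refine Finset.sum_congr rfl fun m hm => ?_
  rw [Complex.re_sum]
  refine Finset.sum_congr rfl fun n hn => ?_
  congr 1
  rw [map_mul, mul_mul_mul_comm, prod_eq m n (by simp at hm; omega) (by simp at hn; omega) t]

lemma th_ne (m n : ℕ) (hm : 1 ≤ m) (hn : 1 ≤ n) (hmn : m ≠ n) : th m n ≠ 0 := by
  simp only [th, sub_ne_zero]
  intro h
  have : (n:ℝ) = m := Real.log_injOn_pos (by simp; omega) (by simp; omega) h
  exact hmn (by exact_mod_cast this.symm)

lemma term_integral (a : ℕ → ℂ) (m n : ℕ) (hm : 1 ≤ m) (hn : 1 ≤ n) (U : ℝ) :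
    (∫ t in (-U)..U, (a m * (starRingEnd ℂ) (a n) *
        Complex.exp ((Complex.I * ((th m n : ℝ):ℂ)) * (t:ℂ))).re)
      = wf a m n * Kf m n U := by
  by_cases hmn : m = n
  · subst hmn
    have h0 : th m m = 0 := sub_self _
    simp [h0, Kf, wf, mul_comm]
    ring
  · have hθ : th m n ≠ 0 := th_ne m n hm hn hmn
    have hc : (Complex.I * ((th m n : ℝ):ℂ)) ≠ 0 := by
      simp [Complex.I_ne_zero, Complex.ofReal_ne_zero, hθ]
    have hint : IntervalIntegrable (fun t : ℝ => a m * (starRingEnd ℂ) (a n) *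
        Complex.exp ((Complex.I * ((th m n : ℝ):ℂ)) * (t:ℂ))) volume (-U) U := by
      apply Continuous.intervalIntegrable
      fun_prop
    have := (Complex.reCLM.intervalIntegral_comp_comm hint).symm
    simp only [Complex.reCLM_apply] at this
    rw [← this]
    rw [intervalIntegral.integral_const_mul]
    have hexp : (∫ t in (-U)..U, Complex.exp ((Complex.I * ((th m n : ℝ):ℂ)) * (t:ℂ)))
        = ((2 * Real.sin (U * th m n) / th m n : ℝ) : ℂ) := by
      rw [integral_exp_mul_complex hc]
      have e1 : Complex.I * ((th m n : ℝ):ℂ) * (U:ℂ) = ((th m n * U : ℝ):ℂ) * Complex.I := by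
        push_cast; ring
      have e2 : Complex.I * ((th m n : ℝ):ℂ) * ((-U:ℝ):ℂ) = ((-(th m n * U) : ℝ):ℂ) * Complex.I := by
        push_cast; ring
      rw [e1, e2, Complex.exp_mul_I, Complex.exp_mul_I]
      rw [← Complex.ofReal_cos, ← Complex.ofReal_sin, ← Complex.ofReal_cos, ← Complex.ofReal_sin]
      rw [Real.cos_neg, Real.sin_neg]
      rw [div_eq_iff hc]
      have hθ' : ((th m n : ℝ):ℂ) ≠ 0 := Complex.ofReal_ne_zero.mpr hθ
      push_cast
      field_simp
      ring_nf
    rw [hexp, mul_comm, Complex.re_ofReal_mul]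
    simp [wf, Kf, hmn]
    ring

lemma Kf_cont (m n : ℕ) : Continuous (Kf m n) := by
  unfold Kf
  by_cases h : m = n
  · simp only [if_pos h]; fun_prop
  · simp only [if_neg h]; fun_prop

lemma intK (m n : ℕ) (hθ : m = n ∨ th m n ≠ 0) (p q : ℝ) :
    ∫ U in p..q, Kf m n U = Lf m n p q := by
  by_cases h : m = n
  · simp only [Kf, Lf, h, if_true]
    rw [intervalIntegral.integral_const_mul, integral_id]
    ring
  · have hθ' : th m n ≠ 0 := hθ.resolve_left h
    simp only [Kf, Lf, h, if_false]
    have : ∀ U : ℝ, 2 * Real.sin (U * th m n) / th m n = (2 / th m n) * Real.sin (U * th m n) := by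
      intro U; ring
    simp_rw [this]
    rw [intervalIntegral.integral_const_mul]
    rw [intervalIntegral.integral_comp_mul_right Real.sin hθ', integral_sin, smul_eq_mul,
      mul_comm p (th m n), mul_comm q (th m n)]
    field_simp
    try exact Or.inl trivial

lemma log_gap {N m n : ℕ} (hm : 1 ≤ m) (hm' : m ≤ N) (hn : 1 ≤ n) (hn' : n ≤ N)
    (hmn : m ≠ n) : |(m:ℝ) - n| ≤ N * |th m n| := by
  have key : ∀ p q : ℕ, 1 ≤ p → q ≤ N → p < q → ((q:ℝ) - p) ≤ N * (Real.log q - Real.log p) := by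
    intro p q hp hq hpq
    have hp0 : (0:ℝ) < p := by exact_mod_cast hp
    have hq0 : (0:ℝ) < q := lt_of_lt_of_le hp0 (by exact_mod_cast le_of_lt hpq)
    have h1 : Real.log ((p:ℝ)/q) ≤ (p:ℝ)/q - 1 := Real.log_le_sub_one_of_pos (by positivity)
    have h2 : Real.log ((p:ℝ)/q) = Real.log p - Real.log q := Real.log_div (ne_of_gt hp0) (ne_of_gt hq0)
    have h3 : ((q:ℝ) - p)/q ≤ Real.log q - Real.log p := by
      rw [h2] at h1
      have : 1 - (p:ℝ)/q ≤ Real.log q - Real.log p := by linarith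
      calc ((q:ℝ) - p)/q = 1 - (p:ℝ)/q := by field_simp
        _ ≤ _ := this
    have hNq : (q:ℝ) ≤ N := by exact_mod_cast hq
    have h4 : ((q:ℝ) - p)/N ≤ ((q:ℝ) - p)/q := by
      apply div_le_div_of_nonneg_left _ hq0 hNq
      · have : (p:ℝ) < q := by exact_mod_cast hpq
        linarith
    have hN0 : (0:ℝ) < N := by
      have : 1 ≤ N := le_trans hp (le_of_lt (lt_of_lt_of_le hpq hq))
      exact_mod_cast this
    calc ((q:ℝ) - p) = N * (((q:ℝ) - p)/N) := by field_simp
      _ ≤ N * (Real.log q - Real.log p) := by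
          apply mul_le_mul_of_nonneg_left _ (le_of_lt hN0)
          linarith
  have hN0 : (0:ℝ) < N := by
    have : 1 ≤ N := le_trans hm hm'
    exact_mod_cast this
  rcases lt_or_gt_of_ne hmn with h | h
  · have hk := key m n hm hn' h
    have hcast : (m:ℝ) < n := by exact_mod_cast h
    have hth : 0 < th m n := by
      unfold th at *; nlinarith
    rw [abs_sub_comm, abs_of_pos (by linarith), abs_of_pos hth]
    exact hk
  · have hk := key n m hn hm' h
    have hcast : (n:ℝ) < m := by exact_mod_cast h
    have hth : th m n < 0 := by
      unfold th at *; nlinarith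
    rw [abs_of_pos (by linarith), abs_of_neg hth]
    unfold th at *; linarith

lemma sum_inv_sq (N : ℕ) : ∑ k ∈ Icc 1 N, (1:ℝ)/(k:ℝ)^2 ≤ 2 := by
  have H : ∀ M : ℕ, 1 ≤ M → ∑ k ∈ Icc 1 M, (1:ℝ)/(k:ℝ)^2 ≤ 2 - 1/(M:ℝ) := by
    intro M hM
    induction M, hM using Nat.le_induction with
    | base => norm_num
    | succ M hM ih =>
      rw [Finset.sum_Icc_succ_top (by omega)]
      have hM0 : (0:ℝ) < M := by exact_mod_cast hM
      have h1 : (1:ℝ)/((M:ℝ)+1)^2 ≤ 1/(M:ℝ) - 1/((M:ℝ)+1) := by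
        rw [div_sub_div _ _ (ne_of_gt hM0) (by positivity)]
        rw [div_le_div_iff₀ (by positivity) (by positivity)]
        ring_nf
        nlinarith
      push_cast
      linarith
  rcases Nat.eq_zero_or_pos N with h | h
  · simp [h]
  · have := H N h
    have : (0:ℝ) < N := by exact_mod_cast h
    linarith [H N h, one_div_pos.mpr this]

lemma sum_erase_comm (s : Finset ℕ) (φ : ℕ → ℕ → ℝ) :
    ∑ m ∈ s, ∑ n ∈ s.erase m, φ m n = ∑ n ∈ s, ∑ m ∈ s.erase n, φ m n := by
  have h : ∀ (ψ : ℕ → ℕ → ℝ) (m : ℕ), ∑ n ∈ s.erase m, ψ m n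
      = ∑ n ∈ s, if n ≠ m then ψ m n else 0 := by
    intro ψ m
    rw [← Finset.sum_filter, Finset.filter_ne']
  simp_rw [h]
  rw [Finset.sum_comm]
  refine Finset.sum_congr rfl fun n hn => ?_
  rw [h (fun n m => φ m n) n]
  refine Finset.sum_congr rfl fun m hm => ?_
  by_cases hmn : m = n
  · simp [hmn]
  · have h1 : n ≠ m := fun h' => hmn h'.symm
    simp [hmn, h1]

lemma erase_inv_sq {N n : ℕ} (hn1 : 1 ≤ n) (hn2 : n ≤ N) :
    ∑ m ∈ (Icc 1 N).erase n, (1:ℝ)/((m:ℝ)-(n:ℝ))^2 ≤ 4 := by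
  set s := (Icc 1 N).erase n with hs
  have hsub : ∀ p : ℕ → Prop, ∀ (dp : DecidablePred p),
      ∀ d : ℕ → ℕ, (∀ m ∈ s.filter p, 1 ≤ d m ∧ d m ≤ N) →
      (∀ m₁ ∈ s.filter p, ∀ m₂ ∈ s.filter p, d m₁ = d m₂ → m₁ = m₂) →
      (∀ m ∈ s.filter p, ((m:ℝ)-(n:ℝ))^2 = ((d m : ℕ):ℝ)^2) →
      ∑ m ∈ s.filter p, (1:ℝ)/((m:ℝ)-(n:ℝ))^2 ≤ 2 := by
    intro p dp d hrange hinj hval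
    have h1 : ∑ m ∈ s.filter p, (1:ℝ)/((m:ℝ)-(n:ℝ))^2
        = ∑ m ∈ s.filter p, (1:ℝ)/((d m : ℕ):ℝ)^2 := by
      refine Finset.sum_congr rfl fun m hm => ?_
      rw [hval m hm]
    have h2 : ∑ k ∈ (s.filter p).image d, (1:ℝ)/(k:ℝ)^2 = ∑ m ∈ s.filter p, (1:ℝ)/((d m : ℕ):ℝ)^2 :=
      Finset.sum_image (g := d) (f := fun k : ℕ => (1:ℝ)/(k:ℝ)^2) hinj
    rw [h1, ← h2]
    calc _ ≤ ∑ k ∈ Icc 1 N, (1:ℝ)/(k:ℝ)^2 := by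
            apply Finset.sum_le_sum_of_subset_of_nonneg
            · intro k hk
              simp only [Finset.mem_image] at hk
              obtain ⟨m, hm, rfl⟩ := hk
              have := hrange m hm
              simp only [Finset.mem_Icc]
              omega
            · intro k _ _; positivity
      _ ≤ 2 := sum_inv_sq N
  have hsplit := Finset.sum_filter_add_sum_filter_not s (· < n)
    (fun m => (1:ℝ)/((m:ℝ)-(n:ℝ))^2)
  have mem_s : ∀ m ∈ s, 1 ≤ m ∧ m ≤ N ∧ m ≠ n := by
    intro m hm
    rw [hs, Finset.mem_erase, Finset.mem_Icc] at hm
    exact ⟨hm.2.1, hm.2.2, hm.1⟩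
  have hb1 : ∑ m ∈ s.filter (· < n), (1:ℝ)/((m:ℝ)-(n:ℝ))^2 ≤ 2 := by
    refine hsub _ _ (fun m => n - m) ?_ ?_ ?_
    · intro m hm
      rw [Finset.mem_filter] at hm
      have := mem_s m hm.1
      have hlt : m < n := hm.2
      show 1 ≤ n - m ∧ n - m ≤ N
      omega
    · intro m₁ hm₁ m₂ hm₂ h
      rw [Finset.mem_filter] at hm₁ hm₂
      have l1 : m₁ < n := hm₁.2
      have l2 : m₂ < n := hm₂.2
      have h' : n - m₁ = n - m₂ := h
      omega
    · intro m hm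
      rw [Finset.mem_filter] at hm
      have h1 : m < n := hm.2
      have : ((n - m : ℕ):ℝ) = (n:ℝ) - m := by
        push_cast [Nat.cast_sub (le_of_lt h1)]; ring
      rw [this]; ring
  have hb2 : ∑ m ∈ s.filter (¬ · < n), (1:ℝ)/((m:ℝ)-(n:ℝ))^2 ≤ 2 := by
    refine hsub _ _ (fun m => m - n) ?_ ?_ ?_
    · intro m hm
      rw [Finset.mem_filter] at hm
      have := mem_s m hm.1
      have hge : ¬ m < n := hm.2
      show 1 ≤ m - n ∧ m - n ≤ N
      omega
    · intro m₁ hm₁ m₂ hm₂ h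
      rw [Finset.mem_filter] at hm₁ hm₂
      have h1 := mem_s m₁ hm₁.1
      have h2 := mem_s m₂ hm₂.1
      have l1 : ¬ m₁ < n := hm₁.2
      have l2 : ¬ m₂ < n := hm₂.2
      have h' : m₁ - n = m₂ - n := h
      omega
    · intro m hm
      rw [Finset.mem_filter] at hm
      have h0 := mem_s m hm.1
      have hge : ¬ m < n := hm.2
      have h1 : n ≤ m := by omega
      have : ((m - n : ℕ):ℝ) = (m:ℝ) - n := by
        push_cast [Nat.cast_sub h1]; ring
      rw [this]
  linarith

lemma term_cont (a : ℕ → ℂ) (m n : ℕ) : Continuous (fun t : ℝ =>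
    (a m * (starRingEnd ℂ) (a n) * Complex.exp ((Complex.I * ((th m n : ℝ):ℂ)) * (t:ℂ))).re) := by
  fun_prop

lemma f_eq (N : ℕ) (a : ℕ → ℂ) (U : ℝ) :
    (∫ t in (-U)..U, ‖∑ n ∈ Icc 1 N, a n * (n:ℂ)^(-(Complex.I*(t:ℂ)))‖^2) = Ff N a U := by
  rw [intervalIntegral.integral_congr (g := fun t => ∑ m ∈ Icc 1 N, ∑ n ∈ Icc 1 N,
      (a m * (starRingEnd ℂ) (a n) * Complex.exp ((Complex.I * ((th m n : ℝ):ℂ)) * (t:ℂ))).re)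
      (fun t _ => integrand_eq N a t)]
  rw [intervalIntegral.integral_finset_sum (fun m _ => (by
      apply Continuous.intervalIntegrable
      exact continuous_finset_sum _ (fun n _ => term_cont a m n)))]
  refine Finset.sum_congr rfl fun m hm => ?_
  rw [intervalIntegral.integral_finset_sum (fun n _ => ((term_cont a m n).intervalIntegrable _ _))]
  refine Finset.sum_congr rfl fun n hn => ?_
  exact term_integral a m n (by simp at hm; omega) (by simp at hn; omega) U

lemma g_cont (N : ℕ) (a : ℕ → ℂ) :
    Continuous (fun t : ℝ => ‖∑ n ∈ Icc 1 N, a n * (n:ℂ)^(-(Complex.I*(t:ℂ)))‖^2) := by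
  have : (fun t : ℝ => ‖∑ n ∈ Icc 1 N, a n * (n:ℂ)^(-(Complex.I*(t:ℂ)))‖^2)
      = fun t : ℝ => ∑ m ∈ Icc 1 N, ∑ n ∈ Icc 1 N,
        (a m * (starRingEnd ℂ) (a n) * Complex.exp ((Complex.I * ((th m n : ℝ):ℂ)) * ((t:ℝ):ℂ))).re :=
    funext (integrand_eq N a)
  rw [this]
  exact continuous_finset_sum _ (fun m _ => continuous_finset_sum _ (fun n _ => term_cont a m n))

lemma Ff_nonneg (N : ℕ) (a : ℕ → ℂ) (p : ℝ) (hp : 0 ≤ p) : 0 ≤ Ff N a p := by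
  rw [← f_eq]
  apply intervalIntegral.integral_nonneg (by linarith)
  intro t _
  positivity

lemma Ff_mono (N : ℕ) (a : ℕ → ℂ) (p q : ℝ) (hp : 0 ≤ p) (hpq : p ≤ q) :
    Ff N a p ≤ Ff N a q := by
  rw [← f_eq, ← f_eq]
  set g := fun t : ℝ => ‖∑ n ∈ Icc 1 N, a n * (n:ℂ)^(-(Complex.I*(t:ℂ)))‖^2 with hg
  have hc := g_cont N a
  have i1 : IntervalIntegrable g volume (-q) (-p) := hc.intervalIntegrable _ _
  have i2 : IntervalIntegrable g volume (-p) p := hc.intervalIntegrable _ _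
  have i3 : IntervalIntegrable g volume p q := hc.intervalIntegrable _ _
  have i4 : IntervalIntegrable g volume (-p) q := hc.intervalIntegrable _ _
  have e1 : (∫ t in (-q)..(-p), g t) + (∫ t in (-p)..q, g t) = ∫ t in (-q)..q, g t :=
    intervalIntegral.integral_add_adjacent_intervals i1 i4
  have e2 : (∫ t in (-p)..p, g t) + (∫ t in p..q, g t) = ∫ t in (-p)..q, g t :=
    intervalIntegral.integral_add_adjacent_intervals i2 i3
  have n1 : 0 ≤ ∫ t in (-q)..(-p), g t := by
    apply intervalIntegral.integral_nonneg (by linarith)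
    intro t _; positivity
  have n2 : 0 ≤ ∫ t in p..q, g t := by
    apply intervalIntegral.integral_nonneg hpq
    intro t _; positivity
  linarith

lemma w_diag (a : ℕ → ℂ) (m : ℕ) : wf a m m = ‖a m‖^2 := by
  rw [wf, Complex.mul_conj]
  rw [Complex.ofReal_re, Complex.normSq_eq_norm_sq]

lemma w_bound (a : ℕ → ℂ) (m n : ℕ) : |wf a m n| ≤ ‖a m‖ * ‖a n‖ := by
  calc |wf a m n| ≤ ‖a m * (starRingEnd ℂ) (a n)‖ := Complex.abs_re_le_norm _
    _ = ‖a m‖ * ‖a n‖ := by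
        rw [norm_mul, Complex.norm_conj]

lemma avg_bound (N : ℕ) (a : ℕ → ℂ) (hN : 1 ≤ N) (p q : ℝ) :
    |(∫ U in p..q, Ff N a U) - (∑ n ∈ Icc 1 N, ‖a n‖^2) * (q^2 - p^2)|
      ≤ 16 * (N:ℝ)^2 * ∑ n ∈ Icc 1 N, ‖a n‖^2 := by
  set S := ∑ n ∈ Icc 1 N, ‖a n‖^2 with hS
  -- integral identity
  have hInt : (∫ U in p..q, Ff N a U)
      = ∑ m ∈ Icc 1 N, ∑ n ∈ Icc 1 N, wf a m n * Lf m n p q := by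
    unfold Ff
    rw [intervalIntegral.integral_finset_sum (fun m _ => (by
      apply Continuous.intervalIntegrable
      exact continuous_finset_sum _ (fun n _ => continuous_const.mul (Kf_cont m n))))]
    refine Finset.sum_congr rfl fun m hm => ?_
    rw [intervalIntegral.integral_finset_sum (f := fun n U => wf a m n * Kf m n U) (fun n _ =>
      ((continuous_const.mul (Kf_cont m n)).intervalIntegrable _ _))]
    refine Finset.sum_congr rfl fun n hn => ?_
    rw [intervalIntegral.integral_const_mul]
    congr 1
    apply intK
    by_cases h : m = n
    · exact Or.inl h
    · exact Or.inr (th_ne m n (by simp at hm; omega) (by simp at hn; omega) h)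
  -- split diagonal
  have hsplit : ∑ m ∈ Icc 1 N, ∑ n ∈ Icc 1 N, wf a m n * Lf m n p q
      = S * (q^2 - p^2) + ∑ m ∈ Icc 1 N, ∑ n ∈ (Icc 1 N).erase m, wf a m n * Lf m n p q := by
    have : ∀ m ∈ Icc 1 N, ∑ n ∈ Icc 1 N, wf a m n * Lf m n p q
        = wf a m m * (q^2 - p^2) + ∑ n ∈ (Icc 1 N).erase m, wf a m n * Lf m n p q := by
      intro m hm
      rw [← Finset.sum_erase_add (Icc 1 N) _ hm]
      rw [add_comm]
      congr 1
      simp [Lf]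
    rw [Finset.sum_congr rfl this, Finset.sum_add_distrib]
    congr 1
    rw [← Finset.sum_mul]
    congr 1
    exact Finset.sum_congr rfl fun m _ => w_diag a m
  rw [hInt, hsplit]
  rw [add_sub_cancel_left]
  -- bound the off-diagonal sum
  have hterm : ∀ m ∈ Icc 1 N, ∀ n ∈ (Icc 1 N).erase m,
      |wf a m n * Lf m n p q| ≤ 2*(N:ℝ)^2 * ((‖a m‖^2 + ‖a n‖^2) * ((1:ℝ)/((m:ℝ)-(n:ℝ))^2)) := by
    intro m hm n hn
    rw [Finset.mem_Icc] at hm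
    rw [Finset.mem_erase, Finset.mem_Icc] at hn
    have hmn : n ≠ m := hn.1
    have hm1 : 1 ≤ m := hm.1
    have hn1 : 1 ≤ n := hn.2.1
    have hθ : th m n ≠ 0 := th_ne m n hm1 hn1 (fun h => hmn h.symm)
    have hgap : |(m:ℝ) - n| ≤ N * |th m n| := log_gap hm1 hm.2 hn1 hn.2.2 (fun h => hmn h.symm)
    have hd0 : ((m:ℝ) - n) ≠ 0 := by
      have : (m:ℝ) ≠ n := by exact_mod_cast fun h => hmn (by exact_mod_cast h.symm)
      exact sub_ne_zero.mpr this
    have hgap2 : ((m:ℝ) - n)^2 ≤ (N:ℝ)^2 * (th m n)^2 := by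
      have h2 := mul_self_le_mul_self (abs_nonneg _) hgap
      calc ((m:ℝ) - n)^2 = |(m:ℝ) - n| * |(m:ℝ) - n| := by rw [abs_mul_abs_self, sq]
        _ ≤ (N * |th m n|) * (N * |th m n|) := h2
        _ = (N:ℝ)^2 * (|th m n| * |th m n|) := by ring
        _ = (N:ℝ)^2 * (th m n)^2 := by rw [abs_mul_abs_self]; ring
    have hLf : |Lf m n p q| ≤ 4 / (th m n)^2 := by
      rw [Lf, if_neg (fun h => hmn h.symm)]
      rw [abs_div, abs_of_pos (by positivity : (0:ℝ) < (th m n)^2)]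
      apply div_le_div_of_nonneg_right _ (by positivity)
      · calc |2 * (Real.cos (p * th m n) - Real.cos (q * th m n))|
            ≤ 2 * (|Real.cos (p * th m n)| + |Real.cos (q * th m n)|) := by
              rw [abs_mul]
              rw [(by norm_num : |(2:ℝ)| = 2)]
              apply mul_le_mul_of_nonneg_left _ (by norm_num)
              exact (abs_sub _ _)
          _ ≤ 2 * (1 + 1) := by
              have := Real.abs_cos_le_one (p * th m n)
              have := Real.abs_cos_le_one (q * th m n)
              nlinarith
          _ = 4 := by norm_num
    have hw := w_bound a m n
    have hθ2 : (0:ℝ) < (th m n)^2 := by positivity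
    have hd2 : (0:ℝ) < ((m:ℝ) - n)^2 := by positivity
    have hinv : 4 / (th m n)^2 ≤ 4 * (N:ℝ)^2 / ((m:ℝ)-(n:ℝ))^2 := by
      rw [div_le_div_iff₀ hθ2 hd2]
      nlinarith
    have hwa : ‖a m‖ * ‖a n‖ ≤ (‖a m‖^2 + ‖a n‖^2)/2 := by nlinarith [sq_nonneg (‖a m‖ - ‖a n‖)]
    calc |wf a m n * Lf m n p q| = |wf a m n| * |Lf m n p q| := abs_mul _ _
      _ ≤ (‖a m‖ * ‖a n‖) * (4 * (N:ℝ)^2 / ((m:ℝ)-(n:ℝ))^2) := by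
          apply mul_le_mul hw (hLf.trans hinv) (abs_nonneg _) (by positivity)
      _ ≤ ((‖a m‖^2 + ‖a n‖^2)/2) * (4 * (N:ℝ)^2 / ((m:ℝ)-(n:ℝ))^2) := by
          apply mul_le_mul_of_nonneg_right hwa (by positivity)
      _ = 2*(N:ℝ)^2 * ((‖a m‖^2 + ‖a n‖^2) * ((1:ℝ)/((m:ℝ)-(n:ℝ))^2)) := by
          field_simp
          ring
  -- sum the bounds
  have habs : |∑ m ∈ Icc 1 N, ∑ n ∈ (Icc 1 N).erase m, wf a m n * Lf m n p q|
      ≤ ∑ m ∈ Icc 1 N, ∑ n ∈ (Icc 1 N).erase m,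
          2*(N:ℝ)^2 * ((‖a m‖^2 + ‖a n‖^2) * ((1:ℝ)/((m:ℝ)-(n:ℝ))^2)) := by
    calc _ ≤ ∑ m ∈ Icc 1 N, |∑ n ∈ (Icc 1 N).erase m, wf a m n * Lf m n p q| :=
          Finset.abs_sum_le_sum_abs _ _
      _ ≤ _ := by
          apply Finset.sum_le_sum
          intro m hm
          calc _ ≤ ∑ n ∈ (Icc 1 N).erase m, |wf a m n * Lf m n p q| :=
                Finset.abs_sum_le_sum_abs _ _
            _ ≤ _ := Finset.sum_le_sum (fun n hn => hterm m hm n hn)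
  refine habs.trans ?_
  -- final summation
  have e1 : ∑ m ∈ Icc 1 N, ∑ n ∈ (Icc 1 N).erase m,
      2*(N:ℝ)^2 * ((‖a m‖^2 + ‖a n‖^2) * ((1:ℝ)/((m:ℝ)-(n:ℝ))^2))
      = 2*(N:ℝ)^2 * ((∑ m ∈ Icc 1 N, ∑ n ∈ (Icc 1 N).erase m, ‖a m‖^2 * ((1:ℝ)/((m:ℝ)-(n:ℝ))^2))
        + (∑ m ∈ Icc 1 N, ∑ n ∈ (Icc 1 N).erase m, ‖a n‖^2 * ((1:ℝ)/((m:ℝ)-(n:ℝ))^2))) := by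
    rw [← Finset.sum_add_distrib]
    rw [Finset.mul_sum]
    refine Finset.sum_congr rfl fun m _ => ?_
    rw [← Finset.sum_add_distrib, Finset.mul_sum]
    refine Finset.sum_congr rfl fun n _ => ?_
    ring
  rw [e1]
  have hA : (∑ m ∈ Icc 1 N, ∑ n ∈ (Icc 1 N).erase m, ‖a m‖^2 * ((1:ℝ)/((m:ℝ)-(n:ℝ))^2)) ≤ 4 * S := by
    rw [hS, Finset.mul_sum]
    apply Finset.sum_le_sum
    intro m hm
    rw [← Finset.mul_sum]
    rw [Finset.mem_Icc] at hm
    rw [mul_comm 4 _]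
    apply mul_le_mul_of_nonneg_left _ (by positivity)
    · have h := erase_inv_sq (N := N) (n := m) hm.1 hm.2
      calc ∑ n ∈ (Icc 1 N).erase m, (1:ℝ)/((m:ℝ)-(n:ℝ))^2
          = ∑ n ∈ (Icc 1 N).erase m, (1:ℝ)/((n:ℝ)-(m:ℝ))^2 := by
            refine Finset.sum_congr rfl fun n _ => ?_
            congr 1
            ring
        _ ≤ 4 := h
  have hB : (∑ m ∈ Icc 1 N, ∑ n ∈ (Icc 1 N).erase m, ‖a n‖^2 * ((1:ℝ)/((m:ℝ)-(n:ℝ))^2)) ≤ 4 * S := by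
    rw [sum_erase_comm (Icc 1 N) (fun m n => ‖a n‖^2 * ((1:ℝ)/((m:ℝ)-(n:ℝ))^2))]
    rw [hS, Finset.mul_sum]
    apply Finset.sum_le_sum
    intro n hn
    rw [← Finset.mul_sum]
    rw [Finset.mem_Icc] at hn
    rw [mul_comm 4 _]
    apply mul_le_mul_of_nonneg_left _ (by positivity)
    · exact erase_inv_sq hn.1 hn.2
  have hS0 : 0 ≤ S := by
    rw [hS]; positivity
  nlinarith [sq_nonneg ((N:ℝ))]

lemma Ff_cont (N : ℕ) (a : ℕ → ℂ) : Continuous (Ff N a) := by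
  unfold Ff
  exact continuous_finset_sum _ (fun m _ => continuous_finset_sum _
    (fun n _ => continuous_const.mul (Kf_cont m n)))

/-- Classical mean value theorem for Dirichlet polynomials:
`∫_{-T}^T |A(it)|² dt = (2T + O(N)) ∑_{n ≤ N} |a_n|²`. -/
theorem stmt2 :
    ∃ C : ℝ, 0 < C ∧ ∀ (N : ℕ) (T : ℝ) (a : ℕ → ℂ), 1 ≤ N → 1 ≤ T →
      ∃ E : ℝ, |E| ≤ C * N ∧
        (∫ t in (-T)..T,
            ‖∑ n ∈ Finset.Icc 1 N, a n * (n : ℂ) ^ (-(Complex.I * (t : ℂ)))‖ ^ 2) =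
          (2 * T + E) * ∑ n ∈ Finset.Icc 1 N, ‖a n‖ ^ 2 := by
  refine ⟨17, by norm_num, fun N T a hN hT => ?_⟩
  set S := ∑ n ∈ Finset.Icc 1 N, ‖a n‖ ^ 2 with hS
  have hS0 : (0:ℝ) ≤ S := by rw [hS]; positivity
  have hNR : (1:ℝ) ≤ N := by exact_mod_cast hN
  have hN0 : (0:ℝ) < N := by linarith
  have hT0 : (0:ℝ) ≤ T := by linarith
  set FT := Ff N a T with hFT
  -- upper bound
  have hub : FT ≤ 2*T*S + 17*(N:ℝ)*S := by
    have m1 : (N:ℝ) * FT ≤ ∫ U in T..(T + N), Ff N a U := by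
      have hconst : (∫ U in T..(T + N), FT) = (N:ℝ) * FT := by
        rw [intervalIntegral.integral_const, smul_eq_mul]
        ring_nf
      rw [← hconst]
      apply intervalIntegral.integral_mono_on (by linarith)
        (intervalIntegrable_const) ((Ff_cont N a).intervalIntegrable _ _)
      intro U hU
      exact Ff_mono N a T U hT0 hU.1
    have m2 := avg_bound N a hN T (T + N)
    rw [← hS] at m2
    have m2' : (∫ U in T..(T + N), Ff N a U) ≤ S * ((T+N)^2 - T^2) + 16*(N:ℝ)^2*S := by
      have := abs_le.mp m2
      linarith [this.2]
    have key : (N:ℝ) * FT ≤ (N:ℝ) * (2*T*S + 17*(N:ℝ)*S) := by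
      have hexp : S * ((T+N)^2 - T^2) + 16*(N:ℝ)^2*S = (N:ℝ) * (2*T*S + (N:ℝ)*S + 16*(N:ℝ)*S) := by
        ring
      calc (N:ℝ) * FT ≤ S * ((T+N)^2 - T^2) + 16*(N:ℝ)^2*S := le_trans m1 m2'
        _ = (N:ℝ) * (2*T*S + (N:ℝ)*S + 16*(N:ℝ)*S) := hexp
        _ ≤ (N:ℝ) * (2*T*S + 17*(N:ℝ)*S) := by
            apply mul_le_mul_of_nonneg_left _ (le_of_lt hN0)
            nlinarith
    exact (mul_le_mul_iff_right₀ hN0).mp key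
  -- lower bound
  have hlb : 2*T*S - 17*(N:ℝ)*S ≤ FT := by
    rcases le_or_gt (N:ℝ) T with hTN | hTN
    · have m1 : (∫ U in (T - N)..T, Ff N a U) ≤ (N:ℝ) * FT := by
        have hconst : (∫ U in (T - N)..T, FT) = (N:ℝ) * FT := by
          rw [intervalIntegral.integral_const, smul_eq_mul]
          ring_nf
        rw [← hconst]
        apply intervalIntegral.integral_mono_on (by linarith)
          ((Ff_cont N a).intervalIntegrable _ _) (intervalIntegrable_const)
        intro U hU
        exact Ff_mono N a U T (by linarith [hU.1]) hU.2
      have m2 := avg_bound N a hN (T - N) T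
      rw [← hS] at m2
      have m2' : S * (T^2 - (T-N)^2) - 16*(N:ℝ)^2*S ≤ ∫ U in (T - N)..T, Ff N a U := by
        have := abs_le.mp m2
        linarith [this.1]
      have key : (N:ℝ) * (2*T*S - 17*(N:ℝ)*S) ≤ (N:ℝ) * FT := by
        calc (N:ℝ) * (2*T*S - 17*(N:ℝ)*S)
            = S * (T^2 - (T-N)^2) - 16*(N:ℝ)^2*S := by ring
          _ ≤ ∫ U in (T - N)..T, Ff N a U := m2'
          _ ≤ (N:ℝ) * FT := m1
      exact (mul_le_mul_iff_right₀ hN0).mp key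
    · have h1 : 0 ≤ FT := Ff_nonneg N a T hT0
      nlinarith
  have habs : |FT - 2*T*S| ≤ 17*(N:ℝ)*S := abs_le.mpr ⟨by linarith, by linarith⟩
  refine ⟨(FT - 2*T*S)/S, ?_, ?_⟩
  · rcases eq_or_lt_of_le hS0 with h0 | h0
    · rw [← h0, div_zero, abs_zero]
      positivity
    · rw [abs_div, abs_of_pos h0, div_le_iff₀ h0]
      calc |FT - 2*T*S| ≤ 17*(N:ℝ)*S := habs
        _ = 17*(N:ℝ)*S := rfl
  · rw [f_eq N a T]; try rw [← hFT]; try rw [← hS]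
    rcases eq_or_lt_of_le hS0 with h0 | h0
    · rw [← h0]
      have : |FT - 2*T*0| ≤ 0 := by
        have := habs; rw [← h0] at this; simpa using this
      have hFT0 : FT = 0 := by
        have h2 := abs_le.mp this
        simp only [mul_zero, sub_zero] at h2
        linarith [h2.1, h2.2]
      simp [hFT0]
    · field_simp
      ring
end

section
/- Let X ≥ 3, z₀ = exp((log X)/(log log X)³) and D = exp((log X)/(log log X)). Then Σ_{e | P(z₀), D < e ≤ D z₀} d₃(e)/e ≪_A (log X)^{−A} for any fixed A > 0, where the sum runs over squarefree z₀-smooth integers e in the range (D, D z₀]. -/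
set_option maxHeartbeats 1000000

open Finset Real

/-- The `k`-fold divisor function. -/
def dk : ℕ → ℕ → ℕ
  | 0, n => if n = 1 then 1 else 0
  | (k + 1), n => ∑ d ∈ n.divisors, dk k (n / d)

open ArithmeticFunction ArithmeticFunction.zeta in
lemma dk_eq_zeta_pow (k n : ℕ) : dk k n = (ζ ^ k : ArithmeticFunction ℕ) n := by
  induction k generalizing n with
  | zero => simp [dk, one_apply]
  | succ k ih =>
    rw [pow_succ, mul_comm, zeta_mul_apply]
    show (∑ d ∈ n.divisors, dk k (n / d)) = _
    rw [Nat.sum_div_divisors]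
    exact Finset.sum_congr rfl fun d _ => ih d

open ArithmeticFunction ArithmeticFunction.zeta in
lemma isMult_dk3 : (ζ ^ 3 : ArithmeticFunction ℕ).IsMultiplicative := by
  have h := isMultiplicative_zeta
  rw [pow_succ, pow_succ, pow_one]
  exact (h.mul h).mul h

lemma dk_one_right (k : ℕ) : dk k 1 = 1 := by
  induction k with
  | zero => simp [dk]
  | succ k ih => simp [dk, Nat.divisors_one, ih]

lemma dk_succ_prime {p : ℕ} (hp : p.Prime) (k : ℕ) :
    dk (k+1) p = dk k p + 1 := by
  show (∑ d ∈ p.divisors, dk k (p / d)) = _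
  rw [hp.divisors, Finset.sum_pair hp.one_lt.ne]
  simp [Nat.div_self hp.pos, dk_one_right]

lemma dk3_prime {p : ℕ} (hp : p.Prime) : dk 3 p = 3 := by
  have h1 : dk 1 p = 1 := by
    rw [show (1:ℕ) = 0 + 1 from rfl, dk_succ_prime hp]
    simp [dk, hp.ne_one]
  rw [dk_succ_prime hp, dk_succ_prime hp, h1]

lemma squarefree_prod_primes {S : Finset ℕ} (hS : ∀ p ∈ S, p.Prime) :
    Squarefree (∏ p ∈ S, p) := by
  classical
  induction S using Finset.induction_on with
  | empty => simp
  | @insert a T ha ih =>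
    rw [Finset.prod_insert ha]
    have ha' : a.Prime := hS a (Finset.mem_insert_self a T)
    have hT : ∀ p ∈ T, p.Prime := fun p hp => hS p (Finset.mem_insert_of_mem hp)
    rw [Nat.squarefree_mul_iff]
    refine ⟨Nat.Coprime.prod_right fun p hp => ?_, ha'.squarefree, ih hT⟩
    exact (Nat.coprime_primes ha' (hT p hp)).mpr fun h => ha (h ▸ hp)

lemma dk3_zero : dk 3 0 = 0 := by simp [dk]

lemma dk3_mul {m n : ℕ} (h : Nat.Coprime m n) : dk 3 (m * n) = dk 3 m * dk 3 n := by
  rw [dk_eq_zeta_pow, dk_eq_zeta_pow, dk_eq_zeta_pow]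
  exact isMult_dk3.map_mul_of_coprime h

noncomputable def gAF (s : ℝ) : ArithmeticFunction ℝ :=
  ⟨fun n => (dk 3 n : ℝ) * (n : ℝ) ^ s, by simp [dk3_zero]⟩

lemma gAF_apply (s : ℝ) (n : ℕ) : gAF s n = (dk 3 n : ℝ) * (n : ℝ) ^ s := rfl

lemma gAF_mult (s : ℝ) : (gAF s).IsMultiplicative := by
  constructor
  · simp [gAF_apply, dk_one_right]
  · intro m n h
    rcases eq_or_ne m 0 with rfl | hm
    · have : n = 1 := (Nat.coprime_zero_left n).mp h
      simp [this, gAF_apply, dk3_zero, dk_one_right]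
    rcases eq_or_ne n 0 with rfl | hn
    · have : m = 1 := (Nat.coprime_zero_right m).mp h
      simp [this, gAF_apply, dk3_zero, dk_one_right]
    rw [gAF_apply, gAF_apply, gAF_apply, dk3_mul h, Nat.cast_mul, Nat.cast_mul,
      Real.mul_rpow (Nat.cast_nonneg m) (Nat.cast_nonneg n)]
    ring

lemma sum_divisors_prod (s : ℝ) {S : Finset ℕ} (hS : ∀ p ∈ S, p.Prime) :
    ∑ d ∈ (∏ p ∈ S, p).divisors, (dk 3 d : ℝ) * (d : ℝ) ^ s
      = ∏ p ∈ S, (1 + 3 * (p : ℝ) ^ s) := by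
  have hsq := squarefree_prod_primes hS
  have h := (gAF_mult s).prodPrimeFactors_one_add_of_squarefree hsq
  rw [Nat.primeFactors_prod hS] at h
  rw [show (∑ d ∈ (∏ p ∈ S, p).divisors, (dk 3 d : ℝ) * (d : ℝ) ^ s)
      = ∑ d ∈ (∏ p ∈ S, p).divisors, gAF s d from rfl, ← h]
  refine Finset.prod_congr rfl fun p hp => ?_
  rw [gAF_apply, dk3_prime (hS p hp)]
  norm_num

lemma window_card {j : ℕ} (T : Finset ℕ)
    (hT : ∀ p ∈ T, p.Prime ∧ 2^j ≤ p ∧ p < 2^(j+1)) : j * T.card ≤ 2^(j+2) := by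
  have hsub : T ⊆ Finset.filter Nat.Prime (Finset.range (2^(j+1))) := by
    intro p hp
    exact Finset.mem_filter.mpr ⟨Finset.mem_range.mpr (hT p hp).2.2, (hT p hp).1⟩
  have h1 : (∏ p ∈ T, p) ≤ primorial (2^(j+1) - 1) := by
    unfold primorial
    rw [Nat.sub_add_cancel (Nat.one_le_two_pow)]
    refine Nat.le_of_dvd ?_ (Finset.prod_dvd_prod_of_subset _ _ _ hsub)
    exact Finset.prod_pos fun p hp => (Finset.mem_filter.mp hp).2.pos
  have h2 : primorial (2^(j+1) - 1) ≤ 4 ^ (2^(j+1)) :=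
    le_trans (primorial_le_4_pow _) (Nat.pow_le_pow_right (by norm_num) (Nat.sub_le _ _))
  have h3 : (2:ℕ)^(j * T.card) ≤ ∏ p ∈ T, p := by
    rw [pow_mul]
    calc (2^j : ℕ)^T.card = ∏ _p ∈ T, 2^j := (Finset.prod_const _).symm
    _ ≤ ∏ p ∈ T, p := Finset.prod_le_prod' fun p hp => (hT p hp).2.1
  have h4 : (2:ℕ)^(j * T.card) ≤ 2^(2^(j+2)) := by
    calc (2:ℕ)^(j * T.card) ≤ 4 ^ (2^(j+1)) := le_trans h3 (le_trans h1 h2)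
    _ = 2^(2 * 2^(j+1)) := by rw [pow_mul]; norm_num
    _ = 2^(2^(j+2)) := by ring_nf
  exact (Nat.pow_le_pow_iff_right (le_refl 2)).mp h4

lemma mertens {z : ℝ} (hz : 2 ≤ z) {S : Finset ℕ}
    (hS : ∀ p ∈ S, p.Prime ∧ (p : ℝ) ≤ z) :
    ∑ p ∈ S, (1 : ℝ) / p ≤ 4 + 4 * Real.log (Real.log z / Real.log 2) := by
  classical
  set M := ⌊z⌋₊ with hM
  have hM2 : 2 ≤ M := Nat.le_floor (by exact_mod_cast hz)
  set J := Nat.log 2 M with hJ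
  have hJ1 : 1 ≤ J := by
    rw [hJ]
    exact (Nat.le_log_iff_pow_le one_lt_two (by omega)).mpr (by simpa using hM2)
  -- fiber decomposition
  have hmaps : ∀ p ∈ S, Nat.log 2 p ∈ Finset.range (J + 1) := by
    intro p hp
    have hpM : p ≤ M := Nat.le_floor (hS p hp).2
    exact Finset.mem_range.mpr (Nat.lt_succ_of_le (Nat.log_mono_right hpM))
  rw [← Finset.sum_fiberwise_of_maps_to hmaps]
  -- bound each fiber
  have hfiber : ∀ j ∈ Finset.range (J + 1),
      (∑ p ∈ S.filter (fun p => Nat.log 2 p = j), (1:ℝ)/p) ≤ 4 / j := by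
    intro j _
    set T := S.filter (fun p => Nat.log 2 p = j) with hT
    have hTprops : ∀ p ∈ T, p.Prime ∧ 2^j ≤ p ∧ p < 2^(j+1) := by
      intro p hp
      rw [hT, Finset.mem_filter] at hp
      obtain ⟨hpS, hlog⟩ := hp
      have hp1 : p ≠ 0 := (hS p hpS).1.pos.ne'
      refine ⟨(hS p hpS).1, ?_, ?_⟩
      · rw [← hlog]; exact Nat.pow_log_le_self 2 hp1
      · rw [← hlog]; exact Nat.lt_pow_succ_log_self one_lt_two p
    have hcard : j * T.card ≤ 2^(j+2) := window_card T hTprops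
    calc (∑ p ∈ T, (1:ℝ)/p) ≤ ∑ _p ∈ T, (1:ℝ)/2^j := by
          refine Finset.sum_le_sum fun p hp => ?_
          have h2j : (2:ℝ)^j ≤ (p:ℝ) := by exact_mod_cast (hTprops p hp).2.1
          exact one_div_le_one_div_of_le (by positivity) h2j
      _ = T.card / 2^j := by rw [Finset.sum_const]; ring
      _ ≤ 4 / j := by
          rcases Nat.eq_zero_or_pos j with rfl | hj
          · simp only [Nat.cast_zero, div_zero]
            have : T.card = 0 := by
              rw [Finset.card_eq_zero, Finset.eq_empty_iff_forall_notMem]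
              intro p hp
              have := (hTprops p hp).2.2
              have := (hTprops p hp).1.two_le
              omega
            simp [this]
          · rw [div_le_div_iff₀ (by positivity) (by exact_mod_cast hj)]
            have : (j : ℝ) * T.card ≤ 2^(j+2) := by exact_mod_cast hcard
            calc (T.card : ℝ) * j ≤ 2^(j+2) := by linarith
              _ = 4 * 2^j := by ring
              _ = 4 * 2^j := rfl
  calc (∑ j ∈ Finset.range (J+1), ∑ p ∈ S.filter (fun p => Nat.log 2 p = j), (1:ℝ)/p)
      ≤ ∑ j ∈ Finset.range (J+1), 4 / (j:ℝ) := Finset.sum_le_sum hfiber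
    _ = 4 * ∑ j ∈ Finset.range (J+1), 1 / (j:ℝ) := by
        rw [Finset.mul_sum]; exact Finset.sum_congr rfl fun j _ => by ring
    _ = 4 * (harmonic J : ℝ) := by
        congr 1
        rw [Finset.sum_range_succ']
        simp only [Nat.cast_zero, div_zero, add_zero]
        rw [harmonic]
        push_cast
        exact Finset.sum_congr rfl fun i _ => by rw [one_div]
    _ ≤ 4 * (1 + Real.log J) := by
        have := harmonic_le_one_add_log J
        linarith
    _ ≤ 4 + 4 * Real.log (Real.log z / Real.log 2) := by
        have hJle : (J : ℝ) ≤ Real.log z / Real.log 2 := by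
          have h2J : (2:ℝ)^J ≤ z := by
            calc (2:ℝ)^J ≤ (M:ℝ) := by exact_mod_cast Nat.pow_log_le_self 2 (by omega)
              _ ≤ z := Nat.floor_le (by linarith)
          have : (J:ℝ) * Real.log 2 ≤ Real.log z := by
            rw [← Real.log_pow]
            exact Real.log_le_log (by positivity) h2J
          rw [le_div_iff₀ (Real.log_pos one_lt_two)]
          exact this
        have hlog := Real.log_le_log (by exact_mod_cast hJ1) hJle
        linarith

/-- Rankin's trick estimate: summing `d₃(e)/e` over squarefree `z₀`-smooth integers
`e ∈ (D, D z₀]` gives `≪_A (log X)^{-A}`. -/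
theorem stmt4 (A : ℝ) (hA : 0 < A) :
    ∃ C : ℝ, 0 < C ∧ ∀ X : ℝ, 3 ≤ X →
      (∑ e ∈ (Finset.range (⌊Real.exp (Real.log X / Real.log (Real.log X)) *
            Real.exp (Real.log X / (Real.log (Real.log X)) ^ 3)⌋₊ + 1)).filter
          (fun (e : ℕ) => Squarefree e ∧
            (∀ p ∈ e.primeFactors,
              (p : ℝ) < Real.exp (Real.log X / (Real.log (Real.log X)) ^ 3)) ∧
            Real.exp (Real.log X / Real.log (Real.log X)) < (e : ℝ) ∧
            (e : ℝ) ≤ Real.exp (Real.log X / Real.log (Real.log X)) *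
              Real.exp (Real.log X / (Real.log (Real.log X)) ^ 3)),
        (dk 3 e : ℝ) / e) ≤ C * Real.log X ^ (-A) := by
  set l₀ : ℝ := Real.log (Real.log 3) with hl₀def
  set K : ℝ := 2 + Real.log (1 + (1 / l₀) ^ 3) with hKdef
  refine ⟨Real.exp (36 + 36 * K + (36 + A)^2 / 4), Real.exp_pos _, fun X hX => ?_⟩
  -- basic positivity facts
  have h3 : (1:ℝ) < Real.log 3 := by
    rw [← Real.log_exp 1]
    exact Real.log_lt_log (Real.exp_pos 1) (lt_of_lt_of_le (by
      have := Real.exp_one_lt_d9; linarith) (le_refl 3))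
  have hl₀ : 0 < l₀ := Real.log_pos h3
  set L : ℝ := Real.log X with hLdef
  have hL3 : Real.log 3 ≤ L := Real.log_le_log (by norm_num) hX
  have hL : 1 < L := lt_of_lt_of_le h3 hL3
  have hLpos : 0 < L := by linarith
  set l : ℝ := Real.log L with hldef
  have hl : 0 < l := Real.log_pos hL
  have hl₀l : l₀ ≤ l := Real.log_le_log (by linarith) hL3
  set σ : ℝ := l ^ 3 / L with hσdef
  have hσ : 0 < σ := by positivity
  set N : ℕ := ⌊Real.exp (L / l) * Real.exp (L / l ^ 3)⌋₊ with hNdef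
  set S₀ : Finset ℕ := (Finset.range (N + 2)).filter
    (fun p => p.Prime ∧ (p : ℝ) < Real.exp (L / l ^ 3)) with hS₀def
  have hS₀prime : ∀ p ∈ S₀, p.Prime := fun p hp => ((Finset.mem_filter.mp hp).2).1
  set P : ℕ := ∏ p ∈ S₀, p with hPdef
  have hPpos : 0 < P := Finset.prod_pos fun p hp => (hS₀prime p hp).pos
  -- exponent algebra
  have haσ : (L / l ^ 3) * σ = 1 := by
    rw [hσdef]; field_simp
  have hbσ : (L / l) * σ = l ^ 2 := by
    rw [hσdef]; field_simp
  set F : Finset ℕ := (Finset.range (N + 1)).filter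
          (fun (e : ℕ) => Squarefree e ∧
            (∀ p ∈ e.primeFactors, (p : ℝ) < Real.exp (L / l ^ 3)) ∧
            Real.exp (L / l) < (e : ℝ) ∧
            (e : ℝ) ≤ Real.exp (L / l) * Real.exp (L / l ^ 3)) with hFdef
  -- Step A+B: termwise Rankin bound
  have stepA : ∀ e ∈ F,
      (dk 3 e : ℝ) / e ≤ Real.exp (-(l^2)) * ((dk 3 e : ℝ) * (e : ℝ) ^ (σ - 1)) := by
    intro e he
    rw [hFdef] at he
    obtain ⟨her, hsq, hsm, hDe, heD⟩ := Finset.mem_filter.mp he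
    have he0 : (0:ℝ) < e := by
      have := (Real.exp_pos (L / l)).trans hDe
      exact_mod_cast this
    have key : 1 ≤ Real.exp (-(l^2)) * (e : ℝ) ^ σ := by
      have h1 : Real.exp ((L / l) * σ) ≤ (e : ℝ) ^ σ := by
        rw [Real.exp_mul]
        exact Real.rpow_le_rpow (Real.exp_pos _).le hDe.le hσ.le
      calc (1:ℝ) = Real.exp (-(l^2)) * Real.exp (l^2) := by
            rw [← Real.exp_add]; simp
        _ ≤ Real.exp (-(l^2)) * (e : ℝ) ^ σ := by
            rw [← hbσ]
            exact mul_le_mul_of_nonneg_left h1 (Real.exp_pos _).le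
    have h0 : 0 ≤ (dk 3 e : ℝ) / e := by positivity
    calc (dk 3 e : ℝ) / e = ((dk 3 e : ℝ) / e) * 1 := by ring
      _ ≤ ((dk 3 e : ℝ) / e) * (Real.exp (-(l^2)) * (e : ℝ) ^ σ) :=
          mul_le_mul_of_nonneg_left key h0
      _ = Real.exp (-(l^2)) * ((dk 3 e : ℝ) * (e : ℝ) ^ (σ - 1)) := by
          rw [Real.rpow_sub he0, Real.rpow_one]
          field_simp
  -- subset into divisors of P
  have hsubset : F ⊆ P.divisors := by
    intro e he
    rw [hFdef] at he
    obtain ⟨her, hsq, hsm, hDe, heD⟩ := Finset.mem_filter.mp he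
    have heN : e ≤ N := Nat.lt_succ_iff.mp (Finset.mem_range.mp her)
    have hsub : e.primeFactors ⊆ S₀ := by
      intro p hp
      refine Finset.mem_filter.mpr ⟨Finset.mem_range.mpr ?_, Nat.prime_of_mem_primeFactors hp,
        hsm p hp⟩
      have : p ≤ e := Nat.le_of_dvd hsq.ne_zero.bot_lt (Nat.dvd_of_mem_primeFactors hp)
      omega
    rw [Nat.mem_divisors]
    refine ⟨?_, hPpos.ne'⟩
    calc e = ∏ p ∈ e.primeFactors, p := (Nat.prod_primeFactors_of_squarefree hsq).symm
      _ ∣ P := Finset.prod_dvd_prod_of_subset _ _ _ hsub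
  -- the per-prime factor bound
  have hfac : ∀ p ∈ S₀, (1 : ℝ) + 3 * (p:ℝ) ^ (σ - 1) ≤ Real.exp (9 / p) := by
    intro p hp
    have hp2 : 2 ≤ p := (hS₀prime p hp).two_le
    have hp0 : (0:ℝ) < p := by exact_mod_cast (hS₀prime p hp).pos
    have hpz : (p:ℝ) < Real.exp (L / l ^ 3) := ((Finset.mem_filter.mp hp).2).2
    have hpσ : (p:ℝ) ^ σ ≤ 3 := by
      calc (p:ℝ) ^ σ ≤ (Real.exp (L / l ^ 3)) ^ σ :=
            Real.rpow_le_rpow (Nat.cast_nonneg p) hpz.le hσ.le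
        _ = Real.exp ((L / l ^ 3) * σ) := (Real.exp_mul _ _).symm
        _ = Real.exp 1 := by rw [haσ]
        _ ≤ 3 := by have := Real.exp_one_lt_d9; linarith
    have h1 : 3 * (p:ℝ) ^ (σ - 1) ≤ 9 / p := by
      rw [Real.rpow_sub hp0, Real.rpow_one]
      rw [show (3:ℝ) * ((p:ℝ) ^ σ / p) = 3 * (p:ℝ) ^ σ / p from by ring]
      gcongr
      linarith
    calc (1:ℝ) + 3 * (p:ℝ) ^ (σ - 1) = 3 * (p:ℝ) ^ (σ - 1) + 1 := by ring
      _ ≤ Real.exp (3 * (p:ℝ) ^ (σ - 1)) := Real.add_one_le_exp _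
      _ ≤ Real.exp (9 / p) := Real.exp_le_exp.mpr h1
  -- Mertens bound
  set z : ℝ := max (Real.exp (L / l ^ 3)) 2 with hzdef
  have hmert : ∑ p ∈ S₀, (1:ℝ) / p ≤ 4 + 4 * Real.log (Real.log z / Real.log 2) :=
    mertens (le_max_right _ 2) (fun p hp =>
      ⟨hS₀prime p hp, le_trans ((Finset.mem_filter.mp hp).2).2.le (le_max_left _ _)⟩)
  -- bound log (log z / log 2) ≤ l + K
  have hlog2pos : (0:ℝ) < Real.log 2 := Real.log_pos one_lt_two
  have hlog2lt : Real.log 2 < 1 := by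
    have := Real.log_two_lt_d9; linarith
  have hzpos : (0:ℝ) < Real.log z :=
    Real.log_pos (lt_of_lt_of_le one_lt_two (le_max_right _ 2))
  have hlogz : Real.log z ≤ (L / l ^ 3) + 1 := by
    have hez : z ≤ 2 * Real.exp (L / l ^ 3) := by
      apply max_le
      · nlinarith [Real.exp_pos (L / l ^ 3)]
      · nlinarith [Real.one_le_exp (show (0:ℝ) ≤ L / l ^ 3 by positivity)]
    calc Real.log z ≤ Real.log (2 * Real.exp (L / l ^ 3)) :=
          Real.log_le_log (lt_of_lt_of_le (by norm_num) (le_max_right _ 2)) hez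
      _ = Real.log 2 + (L / l ^ 3) := by
          rw [Real.log_mul (by norm_num) (Real.exp_pos _).ne', Real.log_exp]
      _ ≤ (L / l ^ 3) + 1 := by linarith
  have hW : Real.log (Real.log z / Real.log 2) ≤ l + K := by
    have h2le : (1:ℝ) / Real.log 2 ≤ 2 := by
      rw [div_le_iff₀ hlog2pos]
      have := Real.log_two_gt_d9; linarith
    have hstep1 : Real.log z / Real.log 2 ≤ ((L / l ^ 3) + 1) * 2 := by
      rw [div_le_iff₀ hlog2pos]
      have hpos : (0:ℝ) < L / l ^ 3 := by positivity
      nlinarith [hlogz, hpos, Real.log_two_gt_d9]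
    have hstep2 : (L / l ^ 3) + 1 ≤ (L + 1) * (1 + (1 / l) ^ 3) := by
      have hu : (0:ℝ) < 1 / l ^ 3 := by positivity
      have hrw2 : ((1:ℝ)/l) ^ 3 = 1 / l ^ 3 := by ring
      have hrw : L / l ^ 3 = L * (1 / l ^ 3) := by ring
      rw [hrw2, hrw]
      nlinarith
    have hstep3 : Real.log ((L + 1) * (1 + (1 / l) ^ 3)) =
        Real.log (L + 1) + Real.log (1 + (1 / l) ^ 3) :=
      Real.log_mul (by positivity) (by positivity)
    have hstep4 : Real.log (L + 1) ≤ 1 + l := by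
      calc Real.log (L + 1) ≤ Real.log (2 * L) :=
            Real.log_le_log (by linarith) (by linarith)
        _ = Real.log 2 + l := by rw [Real.log_mul (by norm_num) hLpos.ne', hldef]
        _ ≤ 1 + l := by linarith
    have hstep5 : Real.log (1 + (1 / l) ^ 3) ≤ K - 2 := by
      rw [hKdef]
      have hll : (1:ℝ)/l ≤ 1/l₀ := one_div_le_one_div_of_le hl₀ hl₀l
      have hcube : ((1:ℝ)/l) ^ 3 ≤ ((1:ℝ)/l₀) ^ 3 :=
        pow_le_pow_left₀ (by positivity) hll 3
      have hmono := Real.log_le_log (show (0:ℝ) < 1 + (1/l)^3 by positivity)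
        (by linarith : (1:ℝ) + (1/l)^3 ≤ 1 + (1/l₀)^3)
      linarith
    calc Real.log (Real.log z / Real.log 2) ≤ Real.log (((L / l ^ 3) + 1) * 2) :=
          Real.log_le_log (by positivity) (le_trans hstep1 (le_refl _))
      _ = Real.log ((L / l ^ 3) + 1) + Real.log 2 := by
          rw [Real.log_mul (by positivity) (by norm_num)]
      _ ≤ Real.log ((L + 1) * (1 + (1 / l) ^ 3)) + 1 := by
          have := Real.log_le_log (show (0:ℝ) < (L / l ^ 3) + 1 by positivity) hstep2
          linarith
      _ ≤ (1 + l) + (K - 2) + 1 := by rw [hstep3]; linarith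
      _ = l + K := by ring
  -- main chain
  calc (∑ e ∈ F, (dk 3 e : ℝ) / e)
      ≤ ∑ e ∈ F, Real.exp (-(l^2)) * ((dk 3 e : ℝ) * (e : ℝ) ^ (σ - 1)) :=
        Finset.sum_le_sum stepA
    _ = Real.exp (-(l^2)) * ∑ e ∈ F,
          ((dk 3 e : ℝ) * (e : ℝ) ^ (σ - 1)) := by rw [← Finset.mul_sum]
    _ ≤ Real.exp (-(l^2)) * ∑ d ∈ P.divisors, ((dk 3 d : ℝ) * (d : ℝ) ^ (σ - 1)) := by
        refine mul_le_mul_of_nonneg_left ?_ (Real.exp_pos _).le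
        exact Finset.sum_le_sum_of_subset_of_nonneg hsubset (fun d _ _ => by positivity)
    _ = Real.exp (-(l^2)) * ∏ p ∈ S₀, (1 + 3 * (p:ℝ) ^ (σ - 1)) := by
        rw [hPdef, sum_divisors_prod (σ - 1) hS₀prime]
    _ ≤ Real.exp (-(l^2)) * Real.exp (∑ p ∈ S₀, 9 / (p:ℝ)) := by
        refine mul_le_mul_of_nonneg_left ?_ (Real.exp_pos _).le
        calc ∏ p ∈ S₀, (1 + 3 * (p:ℝ) ^ (σ - 1)) ≤ ∏ p ∈ S₀, Real.exp (9 / p) :=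
              Finset.prod_le_prod (fun p hp => by positivity) hfac
          _ = Real.exp (∑ p ∈ S₀, 9 / (p:ℝ)) := (Real.exp_sum _ _).symm
    _ ≤ Real.exp (36 + 36 * K + (36 + A)^2 / 4) * L ^ (-A) := by
        rw [← Real.exp_add, Real.rpow_def_of_pos hLpos, ← Real.exp_add, Real.exp_le_exp]
        have h9 : ∑ p ∈ S₀, 9 / (p:ℝ) = 9 * ∑ p ∈ S₀, (1:ℝ)/p := by
          rw [Finset.mul_sum]; exact Finset.sum_congr rfl fun p _ => by ring
        have hsum : ∑ p ∈ S₀, 9 / (p:ℝ) ≤ 9 * (4 + 4 * (l + K)) := by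
          rw [h9]
          have : (4:ℝ) + 4 * Real.log (Real.log z / Real.log 2) ≤ 4 + 4 * (l + K) := by
            linarith
          nlinarith [hmert]
        have hll : Real.log L = l := rfl
        rw [hll]
        nlinarith [sq_nonneg (l - (36 + A)/2)]
end

section
/- Let T ≥ 1 and N > T ≥ |t| > 0, and N < N' ≤ 2N. Then |Σ_{N < n ≤ N'} n^{−1−it}| ≪ 1/|t|, with an absolute implied constant. -/
open Finset

private lemma abel_id (u d : ℕ → ℂ) (a : ℕ) : ∀ b : ℕ, a < b →
    ∑ n ∈ Finset.Ioc a b, (u (n+1) - u n) * d n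
      = u (b+1) * d b - u (a+1) * d (a+1)
        + ∑ n ∈ Finset.Ico (a+1) b, u (n+1) * (d n - d (n+1)) := by
  intro b
  induction b with
  | zero => omega
  | succ b ih =>
    intro hab
    rcases Nat.lt_or_ge a b with h | h
    · rw [Finset.sum_Ioc_succ_top (le_of_lt h), Finset.sum_Ico_succ_top h, ih h]
      ring
    · have hb : b = a := by omega
      subst hb
      rw [Finset.sum_Ioc_succ_top (le_refl _)]
      simp [Finset.Ioc_self]
      ring

noncomputable def uu (t : ℝ) (n : ℕ) : ℂ := (n : ℂ) ^ (-(1 : ℂ) - Complex.I * (t : ℂ))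

noncomputable def ll (n : ℕ) : ℝ := Real.log (n+1) - Real.log n

noncomputable def dd (t : ℝ) (n : ℕ) : ℂ :=
  (Complex.exp ((-(1 : ℂ) - Complex.I * (t : ℂ)) * (ll n : ℂ)) - 1)⁻¹

private lemma ll_lb (n : ℕ) (hn : 1 ≤ n) : 1/((n:ℝ)+1) ≤ ll n := by
  have hn0 : (0:ℝ) < n := by exact_mod_cast hn
  have h1 : Real.log ((n:ℝ)/((n:ℝ)+1)) ≤ (n:ℝ)/((n:ℝ)+1) - 1 :=
    Real.log_le_sub_one_of_pos (by positivity)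
  rw [Real.log_div (by positivity) (by positivity)] at h1
  have : ll n = Real.log ((n:ℝ)+1) - Real.log n := by
    unfold ll; push_cast; ring_nf
  rw [this]
  have h2 : (n:ℝ)/((n:ℝ)+1) - 1 = -(1/((n:ℝ)+1)) := by field_simp; ring
  rw [h2] at h1
  linarith

private lemma ll_ub (n : ℕ) (hn : 1 ≤ n) : ll n ≤ 1/(n:ℝ) := by
  have hn0 : (0:ℝ) < n := by exact_mod_cast hn
  have h1 : Real.log (((n:ℝ)+1)/(n:ℝ)) ≤ ((n:ℝ)+1)/(n:ℝ) - 1 :=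
    Real.log_le_sub_one_of_pos (by positivity)
  rw [Real.log_div (by positivity) (by positivity)] at h1
  have : ll n = Real.log ((n:ℝ)+1) - Real.log n := by
    unfold ll; push_cast; ring_nf
  rw [this]
  have h2 : ((n:ℝ)+1)/(n:ℝ) - 1 = 1/(n:ℝ) := by field_simp; ring
  linarith [h2 ▸ h1]

private lemma exp_lb (t ℓ : ℝ) (ht : 0 < |t|) (hℓ0 : 0 < ℓ) (hℓ : ℓ ≤ 1/2)
    (h1 : |t| * ℓ ≤ 1) :
    |t| * ℓ / 4 ≤ ‖Complex.exp ((-(1:ℂ) - Complex.I * t) * (ℓ:ℂ)) - 1‖ := by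
  set z : ℂ := (-(1:ℂ) - Complex.I * t) * (ℓ:ℂ) with hz
  have hre : z.re = -ℓ := by simp [hz, Complex.mul_re]
  have him : z.im = -(t*ℓ) := by simp [hz, Complex.mul_im]
  have habs : |(Complex.exp z - 1).im| ≤ ‖Complex.exp z - 1‖ := Complex.abs_im_le_norm _
  have him2 : (Complex.exp z - 1).im = Real.exp (-ℓ) * Real.sin (-(t*ℓ)) := by
    simp [Complex.exp_im, hre, him]
  have hsin : abs (Real.sin (-(t*ℓ))) = abs (Real.sin (abs t * ℓ)) := by
    rcases abs_cases t with ⟨h, _⟩ | ⟨h, _⟩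
    · rw [h, Real.sin_neg, abs_neg]
    · rw [h]; ring_nf
  have hx0 : 0 < |t| * ℓ := by positivity
  have hsin2 : (3/4) * (abs t * ℓ) ≤ Real.sin (abs t * ℓ) := by
    have := Real.sin_gt_sub_cube hx0
    nlinarith [pow_le_one₀ (le_of_lt hx0) h1 (n := 2), sq_nonneg (abs t * ℓ)]
  have hsinpos : 0 ≤ Real.sin (abs t * ℓ) := by nlinarith
  have hexp : (1:ℝ)/2 ≤ Real.exp (-ℓ) := by
    have := Real.add_one_le_exp (-ℓ)
    linarith
  calc |t| * ℓ / 4 ≤ Real.exp (-ℓ) * Real.sin (abs t * ℓ) := by nlinarith [Real.exp_pos (-ℓ)]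
    _ = abs (Real.exp (-ℓ) * Real.sin (abs t * ℓ)) :=
        (abs_of_nonneg (mul_nonneg (Real.exp_pos _).le hsinpos)).symm
    _ = |(Complex.exp z - 1).im| := by
        rw [him2, abs_mul, abs_mul, hsin, abs_of_pos (Real.exp_pos _)]
    _ ≤ _ := habs

private lemma dd_lb (t : ℝ) (n : ℕ) (h3 : 3 ≤ n) (ht : 0 < |t|) (htn : |t| + 1 ≤ (n:ℝ)) :
    |t| * ll n / 4 ≤ ‖Complex.exp ((-(1:ℂ) - Complex.I * t) * (ll n : ℂ)) - 1‖ := by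
  have hn3 : (3:ℝ) ≤ n := by exact_mod_cast h3
  have h1 : 1 ≤ n := by omega
  have hlb := ll_lb n h1
  have hub := ll_ub n h1
  apply exp_lb t (ll n) ht
  · have : (0:ℝ) < 1/((n:ℝ)+1) := by positivity
    linarith
  · have : (1:ℝ)/(n:ℝ) ≤ 1/2 := by
      rw [div_le_div_iff₀ (by linarith) (by norm_num)]; linarith
    linarith
  · have h2 : |t| * ll n ≤ |t| * (1/(n:ℝ)) := by
      apply mul_le_mul_of_nonneg_left hub (abs_nonneg t)
    have h4 : |t| * (1/(n:ℝ)) ≤ 1 := by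
      rw [mul_one_div, div_le_one (by linarith)]; linarith
    linarith

private lemma dd_ne (t : ℝ) (n : ℕ) (h3 : 3 ≤ n) (ht : 0 < |t|) (htn : |t| + 1 ≤ (n:ℝ)) :
    Complex.exp ((-(1:ℂ) - Complex.I * t) * (ll n : ℂ)) - 1 ≠ 0 := by
  have := dd_lb t n h3 ht htn
  have hlb := ll_lb n (by omega)
  have hn0 : (0:ℝ) < n := by exact_mod_cast (by omega : 1 ≤ n)
  have hll : 0 < ll n := lt_of_lt_of_le (by positivity) hlb
  intro h
  rw [h, norm_zero] at this
  nlinarith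

private lemma dd_bound (t : ℝ) (n : ℕ) (h3 : 3 ≤ n) (ht : 0 < |t|) (htn : |t| + 1 ≤ (n:ℝ)) :
    ‖dd t n‖ ≤ 4*((n:ℝ)+1)/|t| := by
  have hlb := ll_lb n (by omega)
  have hn0 : (0:ℝ) < n := by exact_mod_cast (by omega : 1 ≤ n)
  have hll : 0 < ll n := lt_of_lt_of_le (by positivity) hlb
  have hkey := dd_lb t n h3 ht htn
  rw [dd, norm_inv]
  have hpos : 0 < |t| * ll n / 4 := by positivity
  have h1 : ‖Complex.exp ((-(1:ℂ) - Complex.I * t) * (ll n : ℂ)) - 1‖⁻¹ ≤ (|t| * ll n / 4)⁻¹ :=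
    inv_anti₀ hpos hkey
  apply le_trans h1
  have hmul : 1 ≤ ll n * ((n:ℝ)+1) := by
    have := (div_le_iff₀ (by positivity : (0:ℝ) < (n:ℝ)+1)).mp hlb
    linarith
  rw [inv_eq_one_div, div_le_div_iff₀ hpos ht]
  nlinarith


private lemma uu_succ (t : ℝ) (n : ℕ) (hn : 1 ≤ n) :
    uu t (n+1) = uu t n * Complex.exp ((-(1:ℂ) - Complex.I * t) * (ll n : ℂ)) := by
  have hn0 : ((n:ℕ):ℂ) ≠ 0 := Nat.cast_ne_zero.2 (by omega)
  have hn1 : (((n+1:ℕ)):ℂ) ≠ 0 := Nat.cast_ne_zero.2 (by omega)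
  rw [uu, uu, Complex.cpow_def_of_ne_zero hn0, Complex.cpow_def_of_ne_zero hn1,
    ← Complex.exp_add]
  congr 1
  rw [← Complex.natCast_log, ← Complex.natCast_log]
  rw [ll]
  push_cast
  ring

private lemma uu_eq (t : ℝ) (n : ℕ) (h3 : 3 ≤ n) (ht : 0 < |t|) (htn : |t| + 1 ≤ (n:ℝ)) :
    uu t n = (uu t (n+1) - uu t n) * dd t n := by
  have hne := dd_ne t n h3 ht htn
  rw [uu_succ t n (by omega), dd]
  field_simp

private lemma uu_norm (t : ℝ) (n : ℕ) (hn : 1 ≤ n) : ‖uu t n‖ = ((n:ℝ))⁻¹ := by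
  have hn0 : (0:ℝ) < (n:ℝ) := by exact_mod_cast hn
  rw [uu, show ((n:ℕ):ℂ) = (((n:ℝ)):ℂ) by push_cast; ring,
    Complex.norm_cpow_eq_rpow_re_of_pos hn0]
  have : (-(1:ℂ) - Complex.I * t).re = -1 := by simp
  rw [this, Real.rpow_neg_one]

private lemma dd_diff (t : ℝ) (n : ℕ) (h3 : 3 ≤ n) (ht1 : 1 ≤ |t|) (htn : |t| + 1 ≤ (n:ℝ)) :
    ‖dd t n - dd t (n+1)‖ ≤ 512 / |t| := by
  have ht : 0 < |t| := lt_of_lt_of_le one_pos ht1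
  have hn0 : (0:ℝ) < (n:ℝ) := by exact_mod_cast (by omega : 1 ≤ n)
  have hn3 : (3:ℝ) ≤ (n:ℝ) := by exact_mod_cast h3
  have htn' : |t| + 1 ≤ ((n+1:ℕ):ℝ) := by push_cast; linarith
  set s : ℂ := -(1:ℂ) - Complex.I * t with hs
  set E1 := Complex.exp (s * (ll n : ℂ)) with hE1
  set E2 := Complex.exp (s * (ll (n+1) : ℂ)) with hE2
  have hne1 : E1 - 1 ≠ 0 := dd_ne t n h3 ht htn
  have hne2 : E2 - 1 ≠ 0 := dd_ne t (n+1) (by omega) ht htn'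
  -- difference identity
  have hid : dd t n - dd t (n+1) = (E2 - E1) * ((E1 - 1)⁻¹ * (E2 - 1)⁻¹) := by
    rw [dd, dd, ← hE1, ← hE2]
    field_simp
    ring
  -- bound on numerator
  have hδub : ll n - ll (n+1) ≤ 2/(n:ℝ)^2 := by
    have h1 := ll_ub n (by omega)
    have h2 := ll_lb (n+1) (by omega)
    have : (1:ℝ)/(n:ℝ) - 1/((n:ℝ)+1+1) ≤ 2/(n:ℝ)^2 := by
      rw [div_sub_div _ _ (by positivity) (by positivity), div_le_div_iff₀ (by positivity) (by positivity)]
      nlinarith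
    push_cast at h2
    linarith
  have hδlb : 0 ≤ ll n - ll (n+1) := by
    have h1 := ll_lb n (by omega)
    have h2 := ll_ub (n+1) (by omega)
    push_cast at h2
    linarith
  have hsabs : ‖s‖ ≤ |t| + 1 := by
    rw [hs]
    calc ‖-(1:ℂ) - Complex.I * t‖ ≤ ‖-(1:ℂ)‖ + ‖Complex.I * (t:ℂ)‖ := norm_sub_le _ _
      _ = 1 + |t| := by simp
      _ = |t| + 1 := by ring
  set w : ℂ := s * ((ll n : ℝ) : ℂ) - s * ((ll (n+1) : ℝ) : ℂ) with hw
  have hwabs : ‖w‖ ≤ (|t| + 1) * (2/(n:ℝ)^2) := by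
    have : w = s * (((ll n - ll (n+1) : ℝ)) : ℂ) := by rw [hw]; push_cast; ring
    rw [this, norm_mul, Complex.norm_real, Real.norm_eq_abs, abs_of_nonneg hδlb]
    exact mul_le_mul hsabs hδub hδlb (by positivity)
  have hwabs1 : ‖w‖ ≤ 1 := by
    have h2 : (|t| + 1) * (2/(n:ℝ)^2) ≤ (n:ℝ) * (2/(n:ℝ)^2) :=
      mul_le_mul_of_nonneg_right htn (by positivity)
    have h3' : (n:ℝ) * (2/(n:ℝ)^2) = 2/(n:ℝ) := by field_simp
    have h4 : 2/(n:ℝ) ≤ 1 := by rw [div_le_one hn0]; linarith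
    linarith
  have hnum : ‖E2 - E1‖ ≤ 8 * |t| / (n:ℝ)^2 := by
    have hE1E2 : E1 = E2 * Complex.exp w := by
      rw [hE1, hE2, hw, ← Complex.exp_add]; congr 1; ring
    have : E2 - E1 = -(E2 * (Complex.exp w - 1)) := by rw [hE1E2]; ring
    rw [this, norm_neg, norm_mul]
    have hE2abs : ‖E2‖ ≤ 1 := by
      rw [hE2, Complex.norm_exp]
      have hre : (s * ((ll (n+1) : ℝ) : ℂ)).re = -(ll (n+1)) := by
        rw [hs]; simp [Complex.mul_re]
      rw [hre, Real.exp_le_one_iff]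
      have := ll_lb (n+1) (by omega)
      have : (0:ℝ) < ll (n+1) := lt_of_lt_of_le (by positivity) this
      linarith
    have hexpw : ‖Complex.exp w - 1‖ ≤ 2 * ‖w‖ := by
      have := Complex.norm_exp_sub_one_le (x := w) hwabs1
      exact this
    calc ‖E2‖ * ‖Complex.exp w - 1‖ ≤ 1 * (2 * ‖w‖) :=
          mul_le_mul hE2abs hexpw (norm_nonneg _) one_pos.le
      _ ≤ 1 * (2 * ((|t| + 1) * (2/(n:ℝ)^2))) := by
          have := hwabs; nlinarith
      _ ≤ 8 * |t| / (n:ℝ)^2 := by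
          have h1t : |t| + 1 ≤ 2 * |t| := by linarith
          rw [one_mul]
          rw [div_eq_mul_inv, div_eq_mul_inv]
          nlinarith [sq_nonneg ((n:ℝ))⁻¹, inv_nonneg.2 (sq_nonneg (n:ℝ))]
  -- bounds on the inverses
  have hd1 : ‖(E1 - 1)⁻¹‖ ≤ 4*((n:ℝ)+1)/|t| := by
    have := dd_bound t n h3 ht htn
    rwa [dd, ← hE1] at this
  have hd2 : ‖(E2 - 1)⁻¹‖ ≤ 4*((n:ℝ)+1+1)/|t| := by
    have := dd_bound t (n+1) (by omega) ht htn'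
    rw [dd, ← hE2] at this
    push_cast at this
    exact this
  rw [hid, norm_mul, norm_mul]
  have key : ‖E2 - E1‖ * (‖(E1-1)⁻¹‖ * ‖(E2-1)⁻¹‖) ≤
      (8 * |t| / (n:ℝ)^2) * ((4*((n:ℝ)+1)/|t|) * (4*((n:ℝ)+1+1)/|t|)) := by
    apply mul_le_mul hnum _ (by positivity) (by positivity)
    exact mul_le_mul hd1 hd2 (norm_nonneg _) (by positivity)
  apply le_trans key
  rw [div_mul_div_comm, div_mul_div_comm, div_le_div_iff₀ (by positivity) ht]
  have hq : ((n:ℝ)+1)*((n:ℝ)+1+1) ≤ 4*(n:ℝ)^2 := by nlinarith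
  nlinarith [mul_le_mul_of_nonneg_right hq (mul_nonneg (abs_nonneg t) (abs_nonneg t))]


/-- If `N > T ≥ |t| > 0` and `N < N' ≤ 2N`, then `|∑_{N < n ≤ N'} n^{-1-it}| ≪ 1/|t|`. -/
theorem stmt9 :
    ∃ C : ℝ, 0 < C ∧ ∀ (N N' : ℕ) (T t : ℝ), 1 ≤ T → |t| ≤ T → 0 < |t| →
      T < (N : ℝ) → N < N' → N' ≤ 2 * N →
      ‖∑ n ∈ Finset.Ioc N N', (n : ℂ) ^ (-(1 : ℂ) - Complex.I * (t : ℂ))‖ ≤ C / |t| := by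
  refine ⟨1000, by norm_num, ?_⟩
  intro N N' T t hT htT ht hTN hNN' hN'2N
  have h1N : 1 < N := by exact_mod_cast lt_of_le_of_lt hT hTN
  have hN2 : 2 ≤ N := h1N
  have hN0 : (0:ℝ) < (N:ℝ) := by positivity
  have hN'R : (N':ℝ) ≤ 2*(N:ℝ) := by exact_mod_cast hN'2N
  have hunorm : ∀ k : ℕ, N ≤ k → ‖uu t k‖ ≤ ((N:ℝ))⁻¹ := by
    intro k hk
    rw [uu_norm t k (by omega)]
    have hkR : (N:ℝ) ≤ (k:ℝ) := by exact_mod_cast hk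
    exact inv_anti₀ hN0 hkR
  rcases le_or_gt |t| 1 with hts | htl
  · -- trivial case |t| ≤ 1
    have hb : ∀ n ∈ Finset.Ioc N N', ‖(n : ℂ) ^ (-(1 : ℂ) - Complex.I * (t : ℂ))‖ ≤ ((N:ℝ))⁻¹ := by
      intro n hn
      rw [Finset.mem_Ioc] at hn
      exact hunorm n (le_of_lt hn.1)
    calc ‖∑ n ∈ Finset.Ioc N N', (n : ℂ) ^ (-(1 : ℂ) - Complex.I * (t : ℂ))‖
        ≤ ∑ n ∈ Finset.Ioc N N', ‖(n : ℂ) ^ (-(1 : ℂ) - Complex.I * (t : ℂ))‖ :=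
          norm_sum_le _ _
      _ ≤ (Finset.Ioc N N').card • ((N:ℝ))⁻¹ := Finset.sum_le_card_nsmul _ _ _ hb
      _ ≤ 1000 / |t| := by
          rw [nsmul_eq_mul, Nat.card_Ioc]
          have hcard : ((N' - N : ℕ):ℝ) ≤ (N:ℝ) := by
            have : N' - N ≤ N := by omega
            exact_mod_cast this
          have h1 : ((N' - N : ℕ):ℝ) * ((N:ℝ))⁻¹ ≤ 1 := by
            rw [← div_eq_mul_inv, div_le_one hN0]
            exact hcard
          have h2 : (1:ℝ) ≤ 1000 / |t| := by
            rw [le_div_iff₀ ht]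
            linarith
          linarith
  · -- main case |t| > 1
    have hτ1 : 1 ≤ |t| := le_of_lt htl
    have hcond : ∀ n : ℕ, N+1 ≤ n → |t| + 1 ≤ (n:ℝ) := by
      intro n hn
      have h1 : ((N:ℝ)+1) ≤ (n:ℝ) := by exact_mod_cast hn
      linarith [lt_of_le_of_lt htT hTN]
    have hsum : ∑ n ∈ Finset.Ioc N N', (n : ℂ) ^ (-(1 : ℂ) - Complex.I * (t : ℂ))
        = ∑ n ∈ Finset.Ioc N N', (uu t (n+1) - uu t n) * dd t n := by
      apply Finset.sum_congr rfl
      intro n hn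
      rw [Finset.mem_Ioc] at hn
      exact uu_eq t n (by omega) ht (hcond n (by omega))
    rw [hsum, abel_id (uu t) (dd t) N N' hNN']
    have hdd12 : ∀ m : ℕ, N+1 ≤ m → m ≤ N' → ‖dd t m‖ ≤ 12*(N:ℝ)/|t| := by
      intro m hm1 hm2
      have hdd : ‖dd t m‖ ≤ 4*((m:ℝ)+1)/|t| := dd_bound t m (by omega) ht (hcond m hm1)
      have hmR : (m:ℝ) ≤ (N':ℝ) := by exact_mod_cast hm2
      have h1 : 4*((m:ℝ)+1) ≤ 12*(N:ℝ) := by linarith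
      have h2 : 4*((m:ℝ)+1)/|t| ≤ 12*(N:ℝ)/|t| := by
        rw [div_le_div_iff₀ ht ht]
        nlinarith
      exact le_trans hdd h2
    have hprod : ∀ k m : ℕ, N ≤ k → N+1 ≤ m → m ≤ N' → ‖uu t k * dd t m‖ ≤ 12/|t| := by
      intro k m hk hm1 hm2
      rw [norm_mul]
      calc ‖uu t k‖ * ‖dd t m‖ ≤ ((N:ℝ))⁻¹ * (12*(N:ℝ)/|t|) :=
            mul_le_mul (hunorm k hk) (hdd12 m hm1 hm2) (norm_nonneg _) (by positivity)
        _ = 12/|t| := by field_simp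
    have hb3 : ‖∑ n ∈ Finset.Ico (N+1) N', uu t (n+1) * (dd t n - dd t (n+1))‖ ≤ 512/|t| := by
      calc ‖∑ n ∈ Finset.Ico (N+1) N', uu t (n+1) * (dd t n - dd t (n+1))‖
          ≤ ∑ n ∈ Finset.Ico (N+1) N', ‖uu t (n+1) * (dd t n - dd t (n+1))‖ := norm_sum_le _ _
        _ ≤ (Finset.Ico (N+1) N').card • (((N:ℝ))⁻¹ * (512/|t|)) := by
            apply Finset.sum_le_card_nsmul
            intro n hn
            rw [Finset.mem_Ico] at hn
            rw [norm_mul]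
            exact mul_le_mul (hunorm (n+1) (by omega))
              (dd_diff t n (by omega) hτ1 (hcond n (by omega)))
              (norm_nonneg _) (by positivity)
        _ ≤ 512/|t| := by
            rw [nsmul_eq_mul, Nat.card_Ico]
            have hcard : ((N' - (N+1) : ℕ):ℝ) ≤ (N:ℝ) := by
              have : N' - (N+1) ≤ N := by omega
              exact_mod_cast this
            calc ((N' - (N+1) : ℕ):ℝ) * (((N:ℝ))⁻¹ * (512/|t|))
                ≤ (N:ℝ) * (((N:ℝ))⁻¹ * (512/|t|)) := by
                  apply mul_le_mul_of_nonneg_right hcard (by positivity)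
              _ = 512/|t| := by field_simp
    calc ‖uu t (N'+1) * dd t N' - uu t (N+1) * dd t (N+1)
          + ∑ n ∈ Finset.Ico (N+1) N', uu t (n+1) * (dd t n - dd t (n+1))‖
        ≤ ‖uu t (N'+1) * dd t N' - uu t (N+1) * dd t (N+1)‖
          + ‖∑ n ∈ Finset.Ico (N+1) N', uu t (n+1) * (dd t n - dd t (n+1))‖ := norm_add_le _ _
      _ ≤ (‖uu t (N'+1) * dd t N'‖ + ‖uu t (N+1) * dd t (N+1)‖)
          + ‖∑ n ∈ Finset.Ico (N+1) N', uu t (n+1) * (dd t n - dd t (n+1))‖ := by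
            exact add_le_add_left (norm_sub_le _ _) _
      _ ≤ (12/|t| + 12/|t|) + 512/|t| :=
            add_le_add (add_le_add (hprod (N'+1) N' (by omega) (by omega) (le_refl _))
              (hprod (N+1) (N+1) (by omega) (le_refl _) (by omega))) hb3
      _ ≤ 1000 / |t| := by
            rw [← add_div, ← add_div, div_le_div_iff₀ ht ht]
            nlinarith
end
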